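/- Let f be a positive reduced ternary quadratic polynomial, let μ₁ ≤ μ₂ ≤ μ₃ be the successive minima of its quadratic part, and let a = (a₁,a₂,a₃) ∈ ℤ³. If it is not the case that |a₁| ≤ 30, |a₂| ≤ 21 and |a₃| ≤ 8, then f(a) ≥ min{(3/2)μ₃, (7/2)μ₂, 31μ₁}. -/

import Mathlib

noncomputable section

open Matrix

/-- A ternary quadratic polynomial over `ℚ`:
`f(x) = Q(x) + ℓ(x) + m` where `Q(x) = xᵀAx` for a symmetric matrix `A`,
`ℓ(x) = b ⬝ x` is a linear form and `m` is a constant. -/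
structure QuadPoly3 where
  A : Matrix (Fin 3) (Fin 3) ℚ
  hA : A.IsSymm
  b : Fin 3 → ℚ
  m : ℚ

namespace QuadPoly3

/-- Evaluation of the quadratic polynomial at a rational point. -/
def eval (f : QuadPoly3) (x : Fin 3 → ℚ) : ℚ :=
  x ⬝ᵥ f.A.mulVec x + f.b ⬝ᵥ x + f.m

/-- The quadratic part evaluated at a rational point. -/
def evalQ (f : QuadPoly3) (x : Fin 3 → ℚ) : ℚ := x ⬝ᵥ f.A.mulVec x

/-- `f` is positive: its quadratic part is positive definite and the minimum of `f`
on `ℤ³` is nonnegative. -/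
def Positive (f : QuadPoly3) : Prop :=
  f.A.PosDef ∧ ∀ x : Fin 3 → ℤ, 0 ≤ f.eval (fun i => (x i : ℚ))

/-- The quadratic part of `f` is Minkowski reduced: for each `i`, `Q(eᵢ) ≤ Q(x)` for every
integer vector `x` whose coordinates `xᵢ, …, xₙ` have gcd `1`. -/
def MinkowskiReducedQ (f : QuadPoly3) : Prop :=
  ∀ (i : Fin 3) (x : Fin 3 → ℤ),
    (Finset.univ.filter fun j => i ≤ j).gcd x = 1 →
      f.A i i ≤ f.evalQ (fun j => (x j : ℚ))

/-- `f` is (Minkowski) reduced: its quadratic part is Minkowski reduced and `f` attains its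
minimum over `ℤ³` at the zero vector.  For such `f` the successive minima of the quadratic
part are the diagonal entries `μ₁ = A 0 0 ≤ μ₂ = A 1 1 ≤ μ₃ = A 2 2`. -/
def Reduced (f : QuadPoly3) : Prop :=
  f.MinkowskiReducedQ ∧ ∀ x : Fin 3 → ℤ, f.eval 0 ≤ f.eval (fun i => (x i : ℚ))

end QuadPoly3


lemma cert (p q r s t : ℚ) (hp0 : 0 ≤ p) (hqp : 0 ≤ q - p)
    (h3 : 0 ≤ p - 2*r) (h4 : 0 ≤ p + 2*r) (h5 : 0 ≤ p - 2*s) (h6 : 0 ≤ p + 2*s)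
    (h7 : 0 ≤ q - 2*t) (h8 : 0 ≤ q + 2*t)
    (hm1 : 0 ≤ p+q+2*(r+s+t)) (hm2 : 0 ≤ p+q+2*(r-s-t))
    (hm3 : 0 ≤ p+q+2*(-r+s-t)) (hm4 : 0 ≤ p+q+2*(-r-s+t)) :
    q*s^2 - 2*r*s*t + p*t^2 ≤ 8/9*q*(p*q - r^2) := by
  linarith [mul_nonneg (mul_nonneg hp0 hp0) hqp,
    mul_nonneg (mul_nonneg hp0 h4) h8,
    mul_nonneg (mul_nonneg hp0 h6) hm4,
    mul_nonneg (mul_nonneg hp0 h6) h8,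
    mul_nonneg (mul_nonneg hp0 h7) h8,
    mul_nonneg (mul_nonneg hp0 hqp) h4,
    mul_nonneg (mul_nonneg hp0 hqp) h6,
    mul_nonneg (mul_nonneg hp0 hqp) hqp,
    mul_nonneg (mul_nonneg h4 h4) hm4,
    mul_nonneg (mul_nonneg h4 h6) h8,
    mul_nonneg (mul_nonneg h4 h5) hm3,
    mul_nonneg (mul_nonneg h4 h5) h6,
    mul_nonneg (mul_nonneg h4 h5) h7,
    mul_nonneg (mul_nonneg h3 h4) h8,
    mul_nonneg (mul_nonneg h3 h6) hm2,
    mul_nonneg (mul_nonneg h3 h3) h4,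
    mul_nonneg (mul_nonneg h3 h5) hm1,
    mul_nonneg (mul_nonneg h3 h5) h8,
    mul_nonneg (mul_nonneg hqp h3) h4,
    mul_nonneg (mul_nonneg hqp h3) h5,
    mul_nonneg (mul_nonneg hqp h5) h6]
lemma qlow (p q c r s t : ℚ) (hp : 0 < p) (hD : 0 < p*q - r^2) (hqc : q ≤ c) (hc : 0 ≤ c)
    (hG : q*s^2 - 2*r*s*t + p*t^2 ≤ 8/9*q*(p*q - r^2))
    (x0 x1 x2 : ℚ) (hx : 81 ≤ x2^2) :
    9*c ≤ p*x0^2+q*x1^2+c*x2^2+2*r*(x0*x1)+2*s*(x0*x2)+2*t*(x1*x2) := by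
  have hdet : (1/9)*c*(p*q - r^2) ≤ p*q*c - p*t^2 - q*s^2 - r^2*c + 2*r*s*t := by
    nlinarith [mul_nonneg (sub_nonneg.2 hqc) hD.le]
  have hx0 : (0:ℚ) ≤ x2^2 := sq_nonneg _
  have hdx : (1/9)*c*(p*q - r^2)*x2^2 ≤ (p*q*c - p*t^2 - q*s^2 - r^2*c + 2*r*s*t)*x2^2 :=
    mul_le_mul_of_nonneg_right hdet hx0
  have h81 : 9*c*(p*q - r^2) ≤ (1/9)*c*(p*q - r^2)*x2^2 := by
    nlinarith [mul_nonneg (mul_nonneg hc hD.le) (sub_nonneg.2 hx)]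
  nlinarith [mul_nonneg hp.le (sub_nonneg.2 (le_trans h81 hdx)),
    mul_nonneg hD.le (sq_nonneg (p*x0 + r*x1 + s*x2)),
    sq_nonneg ((p*q - r^2)*x1 + (p*t - r*s)*x2),
    mul_pos hp hD]
lemma half (p q c r s t b0 b1 b2 m : ℚ)
    (hf : ∀ x0 x1 x2 : ℤ, 0 ≤ p*(x0:ℚ)^2+q*(x1:ℚ)^2+c*(x2:ℚ)^2+2*r*((x0:ℚ)*x1)+2*s*((x0:ℚ)*x2)+2*t*((x1:ℚ)*x2)+b0*x0+b1*x1+b2*x2+m)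
    (hl : ∀ x0 x1 x2 : ℤ, -(p*(x0:ℚ)^2+q*(x1:ℚ)^2+c*(x2:ℚ)^2+2*r*((x0:ℚ)*x1)+2*s*((x0:ℚ)*x2)+2*t*((x1:ℚ)*x2)) ≤ b0*x0+b1*x1+b2*x2)
    (a0 a1 a2 z0 z1 z2 : ℤ) (h0 : a0 % 2 = z0 % 2) (h1 : a1 % 2 = z1 % 2) (h2 : a2 % 2 = z2 % 2) :
    ((p*(a0:ℚ)^2+q*(a1:ℚ)^2+c*(a2:ℚ)^2+2*r*((a0:ℚ)*a1)+2*s*((a0:ℚ)*a2)+2*t*((a1:ℚ)*a2))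
      - (p*(z0:ℚ)^2+q*(z1:ℚ)^2+c*(z2:ℚ)^2+2*r*((z0:ℚ)*z1)+2*s*((z0:ℚ)*z2)+2*t*((z1:ℚ)*z2)))/2
    ≤ p*(a0:ℚ)^2+q*(a1:ℚ)^2+c*(a2:ℚ)^2+2*r*((a0:ℚ)*a1)+2*s*((a0:ℚ)*a2)+2*t*((a1:ℚ)*a2)+b0*a0+b1*a1+b2*a2+m := by
  have e0 : a0 = (a0+z0)/2 + (a0-z0)/2 ∧ z0 = (a0+z0)/2 - (a0-z0)/2 := by omega
  have e1 : a1 = (a1+z1)/2 + (a1-z1)/2 ∧ z1 = (a1+z1)/2 - (a1-z1)/2 := by omega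
  have e2 : a2 = (a2+z2)/2 + (a2-z2)/2 ∧ z2 = (a2+z2)/2 - (a2-z2)/2 := by omega
  have hfw := hf ((a0+z0)/2) ((a1+z1)/2) ((a2+z2)/2)
  have hly := hl ((a0-z0)/2) ((a1-z1)/2) ((a2-z2)/2)
  have c0 : (a0:ℚ) = (((a0+z0)/2 : ℤ) : ℚ) + (((a0-z0)/2 : ℤ) : ℚ) := by exact_mod_cast congrArg (Int.cast : ℤ → ℚ) e0.1
  have c1 : (a1:ℚ) = (((a1+z1)/2 : ℤ) : ℚ) + (((a1-z1)/2 : ℤ) : ℚ) := by exact_mod_cast congrArg (Int.cast : ℤ → ℚ) e1.1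
  have c2 : (a2:ℚ) = (((a2+z2)/2 : ℤ) : ℚ) + (((a2-z2)/2 : ℤ) : ℚ) := by exact_mod_cast congrArg (Int.cast : ℤ → ℚ) e2.1
  have d0 : (z0:ℚ) = (((a0+z0)/2 : ℤ) : ℚ) - (((a0-z0)/2 : ℤ) : ℚ) := by exact_mod_cast congrArg (Int.cast : ℤ → ℚ) e0.2
  have d1 : (z1:ℚ) = (((a1+z1)/2 : ℤ) : ℚ) - (((a1-z1)/2 : ℤ) : ℚ) := by exact_mod_cast congrArg (Int.cast : ℤ → ℚ) e1.2
  have d2 : (z2:ℚ) = (((a2+z2)/2 : ℤ) : ℚ) - (((a2-z2)/2 : ℤ) : ℚ) := by exact_mod_cast congrArg (Int.cast : ℤ → ℚ) e2.2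
  rw [c0, c1, c2, d0, d1, d2]
  linarith [hfw, hly]
lemma case2core (p q U V W Z0 Z1 : ℚ) (hp : 0 ≤ p) (hpq : p ≤ q)
    (hU : 0 ≤ U) (hV : 22 ≤ V) (hW : 0 ≤ W) (hW8 : W ≤ 8)
    (hZ0 : 0 ≤ Z0) (hZ0' : Z0 ≤ 1) (hZ1 : 0 ≤ Z1) (hZ1' : Z1 ≤ 1) :
    7*q ≤ p*U^2 + q*V^2 - p*Z0^2 - q*Z1^2 - p*(U*V) - p*(Z0*Z1)
      - p*(U*W) - p*(Z0*W) - q*(V*W) - q*(Z1*W) := by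
  have hq : 0 ≤ q := hp.trans hpq
  nlinarith [mul_nonneg (sub_nonneg.2 hpq) (mul_nonneg (by linarith : (0:ℚ) ≤ V-22) (by linarith : (0:ℚ) ≤ V+14)),
    mul_nonneg hp (sq_nonneg (2*U-V-8)),
    mul_nonneg hp (mul_nonneg (by linarith : (0:ℚ) ≤ V-22) (by linarith : (0:ℚ) ≤ V+6)),
    mul_nonneg (mul_nonneg hp hU) (by linarith : (0:ℚ) ≤ 8-W),
    mul_nonneg (mul_nonneg hq (by linarith : (0:ℚ) ≤ V)) (by linarith : (0:ℚ) ≤ 8-W),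
    mul_nonneg (mul_nonneg hp (by linarith : (0:ℚ) ≤ 1-Z0)) hW,
    mul_nonneg (mul_nonneg hq (by linarith : (0:ℚ) ≤ 1-Z1)) hW,
    mul_nonneg (mul_nonneg hp hZ0) (by linarith : (0:ℚ) ≤ 1-Z1),
    mul_nonneg hp (by linarith : (0:ℚ) ≤ 1-Z0),
    mul_nonneg hq (mul_nonneg (by linarith : (0:ℚ) ≤ 1-Z1) (by linarith : (0:ℚ) ≤ 1+Z1)),
    mul_nonneg hp (mul_nonneg (by linarith : (0:ℚ) ≤ 1-Z0) (by linarith : (0:ℚ) ≤ 1+Z0))]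
lemma case3core (p U V W : ℚ) (hp : 0 ≤ p) (hU : 31 ≤ U) (hV : 0 ≤ V) (hV' : V ≤ 21)
    (hW : 0 ≤ W) (hW' : W ≤ 8) :
    31*p ≤ p*U^2 - p*(U*V) - p*(U*W) - p*U := by
  nlinarith [mul_nonneg (mul_nonneg hp (by linarith : (0:ℚ) ≤ U)) (by linarith : (0:ℚ) ≤ 21-V),
    mul_nonneg (mul_nonneg hp (by linarith : (0:ℚ) ≤ U)) (by linarith : (0:ℚ) ≤ 8-W),
    mul_nonneg (mul_nonneg hp (by linarith : (0:ℚ) ≤ U-31)) (by linarith : (0:ℚ) ≤ U+1)]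

lemma crossb (k bnd X Y : ℚ) (h1 : 2*k ≤ bnd) (h2 : -(2*k) ≤ bnd) :
    -(bnd*(|X| * |Y|)) ≤ 2*k*(X*Y) ∧ 2*k*(X*Y) ≤ bnd*(|X| * |Y|) := by
  have habs : |2*k| ≤ bnd := abs_le.2 ⟨by linarith, h1⟩
  have h3 : |2*k*(X*Y)| ≤ bnd*(|X| * |Y|) := by
    rw [abs_mul (2*k) (X*Y), abs_mul X Y]
    exact mul_le_mul_of_nonneg_right habs (mul_nonneg (abs_nonneg _) (abs_nonneg _))
  exact abs_le.1 h3

lemma lin1 (k bnd X : ℚ) (h1 : k ≤ bnd) (h2 : -k ≤ bnd) : -(bnd * |X|) ≤ k*X := by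
  have habs : |k| ≤ bnd := abs_le.2 ⟨by linarith, h1⟩
  have h3 : |k*X| ≤ bnd * |X| := by
    rw [abs_mul k X]; exact mul_le_mul_of_nonneg_right habs (abs_nonneg _)
  exact (abs_le.1 h3).1

lemma zbounds (a : ℤ) : (0:ℚ) ≤ ((a % 2 : ℤ) : ℚ) ∧ ((a % 2 : ℤ) : ℚ) ≤ 1 := by
  rcases Int.emod_two_eq a with h | h <;> rw [h] <;> norm_num

set_option maxHeartbeats 2000000 in
lemma key (p q c r s t b0 b1 b2 m : ℚ)
    (hp : 0 < p) (hD : 0 < p*q - r^2)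
    (hpq : p ≤ q) (hqc : q ≤ c)
    (hr1 : 2*r ≤ p) (hr2 : -(2*r) ≤ p) (hs1 : 2*s ≤ p) (hs2 : -(2*s) ≤ p)
    (ht1 : 2*t ≤ q) (ht2 : -(2*t) ≤ q)
    (hm1 : 0 ≤ p+q+2*(r+s+t)) (hm2 : 0 ≤ p+q+2*(r-s-t))
    (hm3 : 0 ≤ p+q+2*(-r+s-t)) (hm4 : 0 ≤ p+q+2*(-r-s+t))
    (hf : ∀ x0 x1 x2 : ℤ, 0 ≤ p*(x0:ℚ)^2+q*(x1:ℚ)^2+c*(x2:ℚ)^2+2*r*((x0:ℚ)*x1)+2*s*((x0:ℚ)*x2)+2*t*((x1:ℚ)*x2)+b0*x0+b1*x1+b2*x2+m)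
    (hl : ∀ x0 x1 x2 : ℤ, -(p*(x0:ℚ)^2+q*(x1:ℚ)^2+c*(x2:ℚ)^2+2*r*((x0:ℚ)*x1)+2*s*((x0:ℚ)*x2)+2*t*((x1:ℚ)*x2)) ≤ b0*x0+b1*x1+b2*x2)
    (a0 a1 a2 : ℤ) (h : ¬(|a0| ≤ 30 ∧ |a1| ≤ 21 ∧ |a2| ≤ 8)) :
    min (min ((3/2:ℚ)*c) ((7/2:ℚ)*q)) ((31:ℚ)*p)
      ≤ p*(a0:ℚ)^2+q*(a1:ℚ)^2+c*(a2:ℚ)^2+2*r*((a0:ℚ)*a1)+2*s*((a0:ℚ)*a2)+2*t*((a1:ℚ)*a2)+b0*a0+b1*a1+b2*a2+m := by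
  have hq0 : (0:ℚ) ≤ q := by linarith
  have hc0 : (0:ℚ) ≤ c := by linarith
  by_cases h2 : |a2| ≤ 8
  · by_cases h1 : |a1| ≤ 21
    · -- case 3 : |a0| ≥ 31
      have h0 : 31 ≤ |a0| := by
        by_contra hh
        exact h ⟨by omega, h1, h2⟩
      have hU : (31:ℚ) ≤ |(a0:ℚ)| := by
        have := (by exact_mod_cast h0 : ((31:ℤ):ℚ) ≤ ((|a0| : ℤ):ℚ)); push_cast at this; linarith
      have hV : |(a1:ℚ)| ≤ 21 := by
        have := (by exact_mod_cast h1 : ((|a1| : ℤ):ℚ) ≤ ((21:ℤ):ℚ)); push_cast at this; linarith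
      have hW : |(a2:ℚ)| ≤ 8 := by
        have := (by exact_mod_cast h2 : ((|a2| : ℤ):ℚ) ≤ ((8:ℤ):ℚ)); push_cast at this; linarith
      have hstep := hf 0 a1 a2
      push_cast at hstep
      have hb0a := lin1 b0 p (a0:ℚ) (by have := hl (-1) 0 0; push_cast at this; linarith)
        (by have := hl 1 0 0; push_cast at this; linarith)
      have cb1 := (crossb r p (a0:ℚ) (a1:ℚ) hr1 hr2).1
      have cb2 := (crossb s p (a0:ℚ) (a2:ℚ) hs1 hs2).1
      have core := case3core p |(a0:ℚ)| |(a1:ℚ)| |(a2:ℚ)| hp.le hU (abs_nonneg _) hV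
        (abs_nonneg _) hW
      have hsq : (a0:ℚ)^2 = |(a0:ℚ)|^2 := (sq_abs _).symm
      have h31 : (31:ℚ)*p ≤ p*(a0:ℚ)^2+q*(a1:ℚ)^2+c*(a2:ℚ)^2+2*r*((a0:ℚ)*a1)+2*s*((a0:ℚ)*a2)+2*t*((a1:ℚ)*a2)+b0*a0+b1*a1+b2*a2+m := by
        nlinarith [hstep, hb0a, cb1, cb2, core, hsq]
      exact le_trans (min_le_right _ _) h31
    · -- case 2 : |a1| ≥ 22, |a2| ≤ 8
      have h1' : 22 ≤ |a1| := by omega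
      have hV : (22:ℚ) ≤ |(a1:ℚ)| := by
        have := (by exact_mod_cast h1' : ((22:ℤ):ℚ) ≤ ((|a1| : ℤ):ℚ)); push_cast at this; linarith
      have hW : |(a2:ℚ)| ≤ 8 := by
        have := (by exact_mod_cast h2 : ((|a2| : ℤ):ℚ) ≤ ((8:ℤ):ℚ)); push_cast at this; linarith
      have hhalf := half p q c r s t b0 b1 b2 m hf hl a0 a1 a2 (a0 % 2) (a1 % 2) a2
        (by omega) (by omega) rfl
      have hz0 := zbounds a0
      have hz1 := zbounds a1
      have cb1 := (crossb r p (a0:ℚ) (a1:ℚ) hr1 hr2).1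
      have cb2 := (crossb s p (a0:ℚ) (a2:ℚ) hs1 hs2).1
      have cb3 := (crossb t q (a1:ℚ) (a2:ℚ) ht1 ht2).1
      have cb4 := (crossb r p ((a0 % 2 : ℤ):ℚ) ((a1 % 2 : ℤ):ℚ) hr1 hr2).2
      have cb5 := (crossb s p ((a0 % 2 : ℤ):ℚ) (a2:ℚ) hs1 hs2).2
      have cb6 := (crossb t q ((a1 % 2 : ℤ):ℚ) (a2:ℚ) ht1 ht2).2
      rw [abs_of_nonneg hz0.1] at cb4 cb5
      rw [abs_of_nonneg hz1.1] at cb4 cb6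
      have core := case2core p q |(a0:ℚ)| |(a1:ℚ)| |(a2:ℚ)| ((a0 % 2 : ℤ):ℚ) ((a1 % 2 : ℤ):ℚ)
        hp.le hpq (abs_nonneg _) hV (abs_nonneg _) hW hz0.1 hz0.2 hz1.1 hz1.2
      have hsq0 : (a0:ℚ)^2 = |(a0:ℚ)|^2 := (sq_abs _).symm
      have hsq1 : (a1:ℚ)^2 = |(a1:ℚ)|^2 := (sq_abs _).symm
      have h72 : (7/2:ℚ)*q ≤ p*(a0:ℚ)^2+q*(a1:ℚ)^2+c*(a2:ℚ)^2+2*r*((a0:ℚ)*a1)+2*s*((a0:ℚ)*a2)+2*t*((a1:ℚ)*a2)+b0*a0+b1*a1+b2*a2+m := by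
        nlinarith [hhalf, core, cb1, cb2, cb3, cb4, cb5, cb6, hsq0, hsq1]
      exact le_trans (le_trans (min_le_left _ _) (min_le_right _ _)) h72
  · -- case 1 : |a2| ≥ 9
    have h2' : 9 ≤ |a2| := by omega
    have hA2sq : (81:ℚ) ≤ (a2:ℚ)^2 := by
      have h81 : (81:ℤ) ≤ a2^2 := by nlinarith [sq_abs a2, h2']
      exact_mod_cast (by exact_mod_cast h81 : ((81:ℤ):ℚ) ≤ ((a2^2 : ℤ):ℚ))
    have hG := cert p q r s t hp.le (by linarith) (by linarith) (by linarith) (by linarith)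
      (by linarith) (by linarith) (by linarith) hm1 hm2 hm3 hm4
    have hQ9 := qlow p q c r s t hp hD hqc hc0 hG (a0:ℚ) (a1:ℚ) (a2:ℚ) hA2sq
    have hhalf := half p q c r s t b0 b1 b2 m hf hl a0 a1 a2 (a0 % 2) (a1 % 2) (a2 % 2)
      (by omega) (by omega) (by omega)
    have hz0 := zbounds a0
    have hz1 := zbounds a1
    have hz2 := zbounds a2
    have hQz : p*((a0 % 2 : ℤ):ℚ)^2+q*((a1 % 2 : ℤ):ℚ)^2+c*((a2 % 2 : ℤ):ℚ)^2
        +2*r*(((a0 % 2 : ℤ):ℚ)*((a1 % 2 : ℤ):ℚ))+2*s*(((a0 % 2 : ℤ):ℚ)*((a2 % 2 : ℤ):ℚ))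
        +2*t*(((a1 % 2 : ℤ):ℚ)*((a2 % 2 : ℤ):ℚ)) ≤ 6*c := by
      rcases Int.emod_two_eq a0 with e0 | e0 <;> rcases Int.emod_two_eq a1 with e1 | e1 <;>
        rcases Int.emod_two_eq a2 with e2 | e2 <;> rw [e0, e1, e2] <;> push_cast <;> linarith
    have h32 : (3/2:ℚ)*c ≤ p*(a0:ℚ)^2+q*(a1:ℚ)^2+c*(a2:ℚ)^2+2*r*((a0:ℚ)*a1)+2*s*((a0:ℚ)*a2)+2*t*((a1:ℚ)*a2)+b0*a0+b1*a1+b2*a2+m := by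
      linarith [hhalf, hQ9, hQz]
    exact le_trans (le_trans (min_le_left _ _) (min_le_left _ _)) h32


set_option maxHeartbeats 1000000

/-- Let `f` be a positive reduced ternary quadratic polynomial with
successive minima `μ₁ = A 0 0, μ₂ = A 1 1, μ₃ = A 2 2` of its quadratic part, and let
`a = (a₁, a₂, a₃) ∈ ℤ³`.  If it is not the case that `|a₁| ≤ 30`, `|a₂| ≤ 21` and `|a₃| ≤ 8`,
then `f(a) ≥ min {(3/2)μ₃, (7/2)μ₂, 31μ₁}`. -/
theorem stmt_5 (f : QuadPoly3) (hpos : f.Positive) (hred : f.Reduced) (a : Fin 3 → ℤ)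
    (h : ¬ (|a 0| ≤ 30 ∧ |a 1| ≤ 21 ∧ |a 2| ≤ 8)) :
    min (min ((3 / 2 : ℚ) * f.A 2 2) ((7 / 2 : ℚ) * f.A 1 1)) ((31 : ℚ) * f.A 0 0)
      ≤ f.eval (fun i => (a i : ℚ)) := by
  obtain ⟨hPD, hge0⟩ := hpos
  obtain ⟨hM, hmin⟩ := hred
  have hsym10 : f.A 1 0 = f.A 0 1 := f.hA.apply 0 1
  have hsym20 : f.A 2 0 = f.A 0 2 := f.hA.apply 0 2
  have hsym21 : f.A 2 1 = f.A 1 2 := f.hA.apply 1 2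
  have hQx : ∀ x : Fin 3 → ℚ, f.evalQ x
      = f.A 0 0*(x 0)^2 + f.A 1 1*(x 1)^2 + f.A 2 2*(x 2)^2 + 2*f.A 0 1*(x 0*x 1)
        + 2*f.A 0 2*(x 0*x 2) + 2*f.A 1 2*(x 1*x 2) := by
    intro x
    simp only [QuadPoly3.evalQ, dotProduct, Matrix.mulVec, Fin.sum_univ_three,
      hsym10, hsym20, hsym21]
    ring
  have hEx : ∀ x : Fin 3 → ℚ, f.eval x
      = (f.A 0 0*(x 0)^2 + f.A 1 1*(x 1)^2 + f.A 2 2*(x 2)^2 + 2*f.A 0 1*(x 0*x 1)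
        + 2*f.A 0 2*(x 0*x 2) + 2*f.A 1 2*(x 1*x 2))
        + (f.b 0*x 0 + f.b 1*x 1 + f.b 2*x 2) + f.m := by
    intro x
    have h0 : f.eval x = f.evalQ x + f.b ⬝ᵥ x + f.m := rfl
    rw [h0, hQx]
    simp [dotProduct, Fin.sum_univ_three]
  have hf' : ∀ x0 x1 x2 : ℤ, 0 ≤ f.A 0 0*(x0:ℚ)^2+f.A 1 1*(x1:ℚ)^2+f.A 2 2*(x2:ℚ)^2
      +2*f.A 0 1*((x0:ℚ)*x1)+2*f.A 0 2*((x0:ℚ)*x2)+2*f.A 1 2*((x1:ℚ)*x2)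
      +f.b 0*x0+f.b 1*x1+f.b 2*x2+f.m := by
    intro x0 x1 x2
    have := hge0 ![x0, x1, x2]
    rw [hEx] at this
    simp at this
    linarith
  have hm0 : f.eval 0 = f.m := by rw [hEx]; simp
  have hl' : ∀ x0 x1 x2 : ℤ, -(f.A 0 0*(x0:ℚ)^2+f.A 1 1*(x1:ℚ)^2+f.A 2 2*(x2:ℚ)^2
      +2*f.A 0 1*((x0:ℚ)*x1)+2*f.A 0 2*((x0:ℚ)*x2)+2*f.A 1 2*((x1:ℚ)*x2))
      ≤ f.b 0*x0+f.b 1*x1+f.b 2*x2 := by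
    intro x0 x1 x2
    have := hmin ![x0, x1, x2]
    rw [hm0, hEx] at this
    simp at this
    linarith
  have mk : ∀ (i : Fin 3) (x0 x1 x2 : ℤ),
      (Finset.univ.filter fun j => i ≤ j).gcd ![x0,x1,x2] = 1 →
      f.A i i ≤ f.A 0 0*(x0:ℚ)^2+f.A 1 1*(x1:ℚ)^2+f.A 2 2*(x2:ℚ)^2
        +2*f.A 0 1*((x0:ℚ)*x1)+2*f.A 0 2*((x0:ℚ)*x2)+2*f.A 1 2*((x1:ℚ)*x2) := by
    intro i x0 x1 x2 hg
    have := hM i ![x0,x1,x2] hg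
    rw [hQx] at this
    simp at this
    linarith
  have hpq : f.A 0 0 ≤ f.A 1 1 := by
    have := mk 0 0 1 0 (by decide); push_cast at this; linarith
  have hqc : f.A 1 1 ≤ f.A 2 2 := by
    have := mk 1 0 0 1 (by decide); push_cast at this; linarith
  have hr1 : 2*f.A 0 1 ≤ f.A 0 0 := by
    have := mk 1 (-1) 1 0 (by decide); push_cast at this; linarith
  have hr2 : -(2*f.A 0 1) ≤ f.A 0 0 := by
    have := mk 1 1 1 0 (by decide); push_cast at this; linarith
  have hs1 : 2*f.A 0 2 ≤ f.A 0 0 := by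
    have := mk 2 (-1) 0 1 (by decide); push_cast at this; linarith
  have hs2 : -(2*f.A 0 2) ≤ f.A 0 0 := by
    have := mk 2 1 0 1 (by decide); push_cast at this; linarith
  have ht1 : 2*f.A 1 2 ≤ f.A 1 1 := by
    have := mk 2 0 (-1) 1 (by decide); push_cast at this; linarith
  have ht2 : -(2*f.A 1 2) ≤ f.A 1 1 := by
    have := mk 2 0 1 1 (by decide); push_cast at this; linarith
  have hm1 : 0 ≤ f.A 0 0+f.A 1 1+2*(f.A 0 1+f.A 0 2+f.A 1 2) := by
    have := mk 2 1 1 1 (by decide); push_cast at this; linarith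
  have hm2 : 0 ≤ f.A 0 0+f.A 1 1+2*(f.A 0 1-f.A 0 2-f.A 1 2) := by
    have := mk 2 (-1) (-1) 1 (by decide); push_cast at this; linarith
  have hm3 : 0 ≤ f.A 0 0+f.A 1 1+2*(-f.A 0 1+f.A 0 2-f.A 1 2) := by
    have := mk 2 1 (-1) 1 (by decide); push_cast at this; linarith
  have hm4 : 0 ≤ f.A 0 0+f.A 1 1+2*(-f.A 0 1-f.A 0 2+f.A 1 2) := by
    have := mk 2 (-1) 1 1 (by decide); push_cast at this; linarith
  have hp : 0 < f.A 0 0 := by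
    have := hPD.dotProduct_mulVec_pos (x := ![1,0,0]) (by intro hz; simpa using congrFun hz 0)
    simpa [dotProduct, Matrix.mulVec, Fin.sum_univ_three] using this
  have hD : 0 < f.A 0 0*f.A 1 1 - (f.A 0 1)^2 := by
    have := hPD.dotProduct_mulVec_pos (x := ![-(f.A 0 1), f.A 0 0, 0])
      (by intro hz; have h1 := congrFun hz 1; simp at h1; exact hp.ne' h1)
    simp only [dotProduct, Matrix.mulVec, Fin.sum_univ_three, hsym10, hsym20, hsym21] at this
    simp at this
    nlinarith [this, hp]
  rw [hEx]
  have hfin := key (f.A 0 0) (f.A 1 1) (f.A 2 2) (f.A 0 1) (f.A 0 2) (f.A 1 2)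
    (f.b 0) (f.b 1) (f.b 2) f.m hp hD hpq hqc hr1 hr2 hs1 hs2 ht1 ht2
    hm1 hm2 hm3 hm4 hf' hl' (a 0) (a 1) (a 2) h
  linarith [hfin]
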